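/- Let ℓ_1 be the space of summable real sequences with standard unit vectors e_j, let k be an odd positive integer, and let (r_j)_{j∈ℕ} be a Rademacher family. Then the random variables η_j := r_j e_j have vanishing injective k-th moment, and for every q ∈ [1,∞) and M ∈ ℕ, ‖Σ_{j=1}^M ⊗^k η_j‖_{L_q(Ω; ⊗^{k,s}_{ε_s} ℓ_1)} = M, so the Monte Carlo estimate with exponent 1/p on the right-hand side cannot hold with any p > 1 in ℓ_1. -/

import Mathlib

open MeasureTheory ProbabilityTheory BigOperators
open scoped TensorProduct ENNReal

/-- the space ℓ₁ of summable real sequences -/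
abbrev ellOne : Type := lp (fun _ : ℕ => ℝ) 1

noncomputable def tpair {k : ℕ} (f : Fin k → (ellOne →L[ℝ] ℝ)) :
    (⨂[ℝ] _ : Fin k, ellOne) →ₗ[ℝ] ℝ :=
  PiTensorProduct.lift
    ((MultilinearMap.mkPiAlgebra ℝ (Fin k) ℝ).compLinearMap fun i => (f i).toLinearMap)

noncomputable def symInjNorm {k : ℕ} (U : ⨂[ℝ] _ : Fin k, ellOne) : ℝ :=
  sSup {r | ∃ f : ellOne →L[ℝ] ℝ, ‖f‖ ≤ 1 ∧ r = |tpair (fun _ => f) U|}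

/-- The "sign functional" `x ↦ ∑_{j<M} s j * x j` on ℓ₁. -/
noncomputable def sgnFun (s : ℕ → ℝ) (M : ℕ) (hs : ∀ j, |s j| ≤ 1) : ellOne →L[ℝ] ℝ :=
  LinearMap.mkContinuous
    { toFun := fun x => ∑ j ∈ Finset.range M, s j * x j
      map_add' := by
        intro x y
        simp only [lp.coeFn_add, Pi.add_apply, mul_add, Finset.sum_add_distrib]
      map_smul' := by
        intro c x
        simp only [lp.coeFn_smul, Pi.smul_apply, smul_eq_mul, RingHom.id_apply,
          Finset.mul_sum]
        exact Finset.sum_congr rfl fun i _ => by ring }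
    1 (by
      intro x
      simp only [LinearMap.coe_mk, AddHom.coe_mk, one_mul, Real.norm_eq_abs]
      calc |∑ j ∈ Finset.range M, s j * x j| ≤ ∑ j ∈ Finset.range M, |s j * x j| :=
            Finset.abs_sum_le_sum_abs _ _
        _ ≤ ∑ j ∈ Finset.range M, |x j| := by
            refine Finset.sum_le_sum fun j _ => ?_
            rw [abs_mul]
            exact mul_le_of_le_one_left (abs_nonneg _) (hs j)
        _ ≤ ‖x‖ := by
            have := lp.sum_rpow_le_norm_rpow (p := 1) (by norm_num) x (Finset.range M)
            simpa [Real.rpow_natCast] using this)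

theorem sgnFun_norm_le (s : ℕ → ℝ) (M : ℕ) (hs : ∀ j, |s j| ≤ 1) : ‖sgnFun s M hs‖ ≤ 1 :=
  LinearMap.mkContinuous_norm_le _ zero_le_one _

theorem sgnFun_single (s : ℕ → ℝ) (M : ℕ) (hs : ∀ j, |s j| ≤ 1) {j : ℕ} (hj : j < M) :
    sgnFun s M hs (lp.single 1 j (1 : ℝ)) = s j := by
  rw [sgnFun]
  simp only [LinearMap.mkContinuous_apply, LinearMap.coe_mk, AddHom.coe_mk]
  rw [Finset.sum_eq_single j]
  · rw [lp.single_apply_self, mul_one]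
  · intro i _ hij
    rw [lp.single_apply_ne _ _ _ hij, mul_zero]
  · intro h; exact absurd (Finset.mem_range.2 hj) h

theorem tpair_tprod {k : ℕ} (f : ellOne →L[ℝ] ℝ) (v : Fin k → ellOne) :
    tpair (fun _ => f) (⨂ₜ[ℝ] i : Fin k, v i) = ∏ i : Fin k, f (v i) := by
  simp [tpair, PiTensorProduct.lift.tprod]

theorem tpair_eval {k M : ℕ} (f : ellOne →L[ℝ] ℝ) (w : Fin M → ellOne) :
    tpair (fun _ => f) (∑ j : Fin M, ⨂ₜ[ℝ] _ : Fin k, w j) = ∑ j : Fin M, (f (w j)) ^ k := by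
  rw [map_sum]
  refine Finset.sum_congr rfl fun j _ => ?_
  rw [tpair_tprod]
  simp [Finset.prod_const]

theorem symInjNorm_sum {k : ℕ} (M : ℕ) (v : ℕ → ℝ)
    (hv : ∀ j, v j = 1 ∨ v j = -1) (e : ℕ → ellOne)
    (he : ∀ j, e j = lp.single 1 j (1 : ℝ)) :
    symInjNorm (∑ j : Fin M, ⨂ₜ[ℝ] _ : Fin k, (v j • e j)) = M := by
  have hvabs : ∀ j, |v j| = 1 := by
    intro j; rcases hv j with h | h <;> simp [h]
  have hvle : ∀ j, |v j| ≤ 1 := fun j => (hvabs j).le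
  have henorm : ∀ j, ‖e j‖ = 1 := by
    intro j
    rw [he j]
    have := lp.norm_single (E := fun _ : ℕ => ℝ) (p := 1) (by norm_num) j (1 : ℝ)
    simpa using this
  have hub : ∀ x ∈ {r | ∃ f : ellOne →L[ℝ] ℝ, ‖f‖ ≤ 1 ∧
      r = |tpair (fun _ => f) (∑ j : Fin M, ⨂ₜ[ℝ] _ : Fin k, (v j • e j))|}, x ≤ (M : ℝ) := by
    rintro x ⟨f, hf, rfl⟩
    rw [tpair_eval]
    calc |∑ j : Fin M, (f (v j • e j)) ^ k| ≤ ∑ j : Fin M, |(f (v j • e j)) ^ k| :=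
          Finset.abs_sum_le_sum_abs _ _
      _ ≤ ∑ _j : Fin M, (1 : ℝ) := by
          refine Finset.sum_le_sum fun j _ => ?_
          rw [abs_pow]
          calc |f (v j • e j)| ^ k ≤ 1 ^ k := by
                refine pow_le_pow_left₀ (abs_nonneg _) ?_ k
                rw [ContinuousLinearMap.map_smul, smul_eq_mul, abs_mul, hvabs j, one_mul]
                calc |f (e j)| ≤ ‖f‖ * ‖e j‖ := f.le_opNorm (e j)
                  _ ≤ 1 := by rw [henorm j, mul_one]; exact hf
            _ = 1 := one_pow k
      _ = (M : ℝ) := by simp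
  have hmem : (M : ℝ) ∈ {r | ∃ f : ellOne →L[ℝ] ℝ, ‖f‖ ≤ 1 ∧
      r = |tpair (fun _ => f) (∑ j : Fin M, ⨂ₜ[ℝ] _ : Fin k, (v j • e j))|} := by
    refine ⟨sgnFun v M hvle, sgnFun_norm_le v M hvle, ?_⟩
    rw [tpair_eval]
    have : ∀ j : Fin M, (sgnFun v M hvle (v j • e j)) ^ k = 1 := by
      intro j
      rw [ContinuousLinearMap.map_smul, smul_eq_mul, he j, sgnFun_single v M hvle j.isLt]
      have : v (j : ℕ) * v (j : ℕ) = 1 := by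
        rcases hv (j : ℕ) with h | h <;> rw [h] <;> norm_num
      rw [this, one_pow]
    rw [Finset.sum_congr rfl fun j _ => this j]
    simp
  rw [symInjNorm]
  exact le_antisymm (Real.sSup_le hub (Nat.cast_nonneg M)) (le_csSup ⟨(M : ℝ), hub⟩ hmem)

theorem rademacher_odd_moment {Ω : Type*} [MeasurableSpace Ω] (μ : Measure Ω)
    [IsProbabilityMeasure μ] (k : ℕ) (hk : Odd k) (r : Ω → ℝ) (hr_meas : Measurable r)
    (hr_val : ∀ᵐ ω ∂μ, r ω = 1 ∨ r ω = -1) (hr_half : μ {ω | r ω = 1} = 1/2) (c : ℝ) :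
    ∫ ω, (r ω * c) ^ k ∂μ = 0 := by
  set A : Set Ω := {ω | r ω = 1} with hA
  have hAm : MeasurableSet A := hr_meas (measurableSet_singleton 1)
  have hcongr : (fun ω => (r ω * c) ^ k) =ᵐ[μ]
      (fun ω => c ^ k * (2 * A.indicator (fun _ => (1:ℝ)) ω - 1)) := by
    filter_upwards [hr_val] with ω hω
    rcases hω with h | h
    · have hωA : ω ∈ A := h
      simp [Set.indicator_of_mem hωA, mul_pow, h]
      ring
    · have hωA : ω ∉ A := by
        simp only [hA, Set.mem_setOf_eq, h]; norm_num
      simp only [Set.indicator_of_notMem hωA, mul_zero, h, neg_one_mul]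
      rw [hk.neg_pow]
      ring
  rw [integral_congr_ae hcongr, integral_const_mul]
  have hint : Integrable (A.indicator (fun _ => (1:ℝ))) μ :=
    (integrable_const (1:ℝ)).indicator hAm
  rw [integral_sub ((hint.const_mul 2)) (integrable_const 1)]
  rw [integral_const_mul, integral_indicator_const _ hAm, integral_const]
  rw [measureReal_def, hr_half]
  norm_num [ENNReal.toReal_div]

/-- **The Monte Carlo rate cannot be improved beyond `p = 1` in ℓ₁.**
For an odd `k`, a Rademacher family `(r_j)_{j∈ℕ}` and `η_j := r_j e_j` with the
standard unit vectors `e_j` of ℓ₁: the `η_j` have vanishing injective `k`-th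
moment, `‖Σ_{j=1}^M ⊗^k η_j‖_{L_q(Ω;⊗^{k,s}_{ε_s}ℓ₁)} = M` for every
`q ∈ [1,∞)` and `M`, and hence no bound of order `M^{1/p}` with `p > 1` can hold. -/
theorem ellOne_counterexample
    {Ω : Type*} [MeasurableSpace Ω] (μ : Measure Ω) [IsProbabilityMeasure μ]
    (k : ℕ) (hk : Odd k) (hk1 : 1 ≤ k)
    (r : ℕ → Ω → ℝ)
    (hr_meas : ∀ j, Measurable (r j))
    (hr_val : ∀ j, ∀ᵐ ω ∂μ, r j ω = 1 ∨ r j ω = -1)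
    (hr_half : ∀ j, μ {ω | r j ω = 1} = 1/2)
    (hr_indep : iIndepFun r μ)
    (e : ℕ → ellOne) (he : ∀ j, e j = lp.single 1 j (1 : ℝ))
    (η : ℕ → Ω → ellOne) (hη : ∀ j ω, η j ω = r j ω • e j) :
    -- (a) vanishing injective k-th moments:
    (∀ j, ∀ f : ellOne →L[ℝ] ℝ, ∫ ω, (f (η j ω)) ^ k ∂μ = 0) ∧
    -- (b) the L_q norm of the Monte Carlo sum equals M:
    (∀ q : ℝ, 1 ≤ q → ∀ M : ℕ,
      (∫ ω, (symInjNorm (∑ j : Fin M, ⨂ₜ[ℝ] _ : Fin k, η j ω)) ^ q ∂μ) ^ (1/q)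
        = M) ∧
    -- (c) hence no estimate of order M^{1/p} with p > 1 is possible:
    (∀ p : ℝ, 1 < p → ¬ ∃ C : ℝ, ∀ M : ℕ, (M : ℝ) ≤ C * (M : ℝ) ^ (1/p)) := by
  refine ⟨?_, ?_, ?_⟩
  · -- (a)
    intro j f
    have : (fun ω => (f (η j ω)) ^ k) = fun ω => (r j ω * f (e j)) ^ k := by
      funext ω
      rw [hη j ω, ContinuousLinearMap.map_smul, smul_eq_mul]
    rw [this]
    exact rademacher_odd_moment μ k hk (r j) (hr_meas j) (hr_val j) (hr_half j) (f (e j))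
  · -- (b)
    intro q hq M
    have hq0 : q ≠ 0 := by linarith
    have hae : ∀ᵐ ω ∂μ, ∀ j, r j ω = 1 ∨ r j ω = -1 := ae_all_iff.2 hr_val
    have h2 : (fun ω => (symInjNorm (∑ j : Fin M, ⨂ₜ[ℝ] _ : Fin k, η j ω)) ^ q) =ᵐ[μ]
        (fun _ => (M : ℝ) ^ q) := by
      filter_upwards [hae] with ω hω
      have h1 := symInjNorm_sum (k := k) M (fun j => r j ω) hω e he
      simp only [hη]
      rw [h1]
    rw [integral_congr_ae h2, integral_const, probReal_univ, one_smul,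
      ← Real.rpow_mul (Nat.cast_nonneg M), mul_one_div, div_self hq0, Real.rpow_one]
  · -- (c)
    rintro p hp ⟨C, hC⟩
    have hp0 : 0 < p := by linarith
    have hc : 0 < 1 - 1/p := by
      have : 1/p < 1 := by
        rw [div_lt_one hp0]; exact hp
      linarith
    have htend : Filter.Tendsto (fun n : ℕ => (n : ℝ) ^ (1 - 1/p)) Filter.atTop Filter.atTop :=
      (tendsto_rpow_atTop hc).comp tendsto_natCast_atTop_atTop
    obtain ⟨M, hM2, hM1⟩ :=
      ((htend.eventually_gt_atTop C).and (Filter.eventually_ge_atTop 1)).exists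
    have hMpos : (0 : ℝ) < M := by exact_mod_cast Nat.lt_of_lt_of_le Nat.zero_lt_one hM1
    have key : C * (M : ℝ) ^ (1/p) < (M : ℝ) ^ (1 - 1/p) * (M : ℝ) ^ (1/p) :=
      mul_lt_mul_of_pos_right hM2 (Real.rpow_pos_of_pos hMpos _)
    rw [← Real.rpow_add hMpos] at key
    have : (1 - 1/p) + 1/p = 1 := by ring
    rw [this, Real.rpow_one] at key
    exact absurd (hC M) (not_le.2 key)
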